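/- (Closed form of Γ₂.) For every nonzero φ ∈ ℝ³, the matrix series Γ₂(φ) := Σ_{n=0}^∞ (1/(n+2)!) φ̂ⁿ converges and equals (1/2) I₃ + ((‖φ‖ − sin‖φ‖) / ‖φ‖³) φ̂ + ((‖φ‖² + 2 cos‖φ‖ − 2) / (2‖φ‖⁴)) φ̂², where ‖φ‖ is the Euclidean norm of φ. -/

import Mathlib

open Matrix

/-- The skew-symmetric (hat) matrix of a vector `φ ∈ ℝ³`, so that `skew φ *ᵥ x = φ × x`. -/
noncomputable def skew (φ : Fin 3 → ℝ) : Matrix (Fin 3) (Fin 3) ℝ :=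
  !![0, -φ 2, φ 1; φ 2, 0, -φ 0; -φ 1, φ 0, 0]

lemma skew_cube (φ : Fin 3 → ℝ) :
    skew φ ^ 3 = (-(φ 0 ^ 2 + φ 1 ^ 2 + φ 2 ^ 2)) • skew φ := by
  rw [pow_succ, pow_succ, pow_one]
  ext i j
  fin_cases i <;> fin_cases j <;>
    simp [skew, Matrix.mul_apply, Fin.sum_univ_three] <;> ring

/-- The Euclidean norm of a vector in `ℝ³`. -/
noncomputable def enorm3 (φ : Fin 3 → ℝ) : ℝ :=
  Real.sqrt (∑ i, φ i ^ 2)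

/-- **Closed form of `Γ₂`**: for nonzero `φ ∈ ℝ³`, the series
`Γ₂(φ) = Σ_{n=0}^∞ (1/(n+2)!) φ̂ⁿ` converges, with sum
`(1/2) I₃ + ((‖φ‖ − sin‖φ‖)/‖φ‖³) φ̂ + ((‖φ‖² + 2cos‖φ‖ − 2)/(2‖φ‖⁴)) φ̂²`. -/
theorem gamma_two_closed_form (φ : Fin 3 → ℝ) (hφ : φ ≠ 0) :
    HasSum (fun n : ℕ => (((n + 2).factorial : ℝ))⁻¹ • skew φ ^ n)
      ((1 / 2 : ℝ) • (1 : Matrix (Fin 3) (Fin 3) ℝ)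
        + ((enorm3 φ - Real.sin (enorm3 φ)) / enorm3 φ ^ 3) • skew φ
        + ((enorm3 φ ^ 2 + 2 * Real.cos (enorm3 φ) - 2) / (2 * enorm3 φ ^ 4)) • skew φ ^ 2) := by
  set t := enorm3 φ with ht
  set A := skew φ with hA
  set f : ℕ → Matrix (Fin 3) (Fin 3) ℝ :=
    fun n => (((n + 2).factorial : ℝ))⁻¹ • A ^ n with hf
  have hsum_nonneg : (0:ℝ) ≤ ∑ i, φ i ^ 2 := Finset.sum_nonneg fun i _ => sq_nonneg _
  have ht2 : t ^ 2 = φ 0 ^ 2 + φ 1 ^ 2 + φ 2 ^ 2 := by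
    rw [ht, enorm3, Real.sq_sqrt hsum_nonneg, Fin.sum_univ_three]
  have htpos : 0 < t := by
    rw [ht, enorm3]
    apply Real.sqrt_pos.2
    rcases hsum_nonneg.lt_or_eq with h | h
    · exact h
    · exact absurd (funext fun i => pow_eq_zero_iff two_ne_zero |>.1 <|
        (Finset.sum_eq_zero_iff_of_nonneg (fun i _ => sq_nonneg (φ i))).1 h.symm i
          (Finset.mem_univ i)) hφ
  have htne : t ≠ 0 := ne_of_gt htpos
  have hA3 : A ^ 3 = (-(t ^ 2)) • A := by rw [ht2]; exact skew_cube φ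
  have hodd : ∀ k : ℕ, A ^ (2 * k + 1) = ((-1 : ℝ) ^ k * t ^ (2 * k)) • A := by
    intro k
    induction k with
    | zero => simp
    | succ k ih =>
      have h1 : A ^ (2 * (k + 1) + 1) = A ^ (2 * k + 1) * A ^ 2 := by
        rw [← pow_add]; ring_nf
      rw [h1, ih, Matrix.smul_mul, ← pow_succ', hA3, smul_smul]
      congr 1; ring
  have heven : ∀ k : ℕ, A ^ (2 * k + 2) = ((-1 : ℝ) ^ k * t ^ (2 * k)) • A ^ 2 := by
    intro k
    have : A ^ (2 * k + 2) = A ^ (2 * k + 1) * A := by rw [← pow_succ]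
    rw [this, hodd k, Matrix.smul_mul, ← sq]
  -- odd part
  have hsin := (hasSum_nat_add_iff'
      (f := fun n : ℕ => (-1 : ℝ) ^ n * t ^ (2 * n + 1) / (2 * n + 1).factorial) 1).2
      (Real.hasSum_sin t)
  have hoddsum : HasSum (fun k : ℕ => f (2 * k + 1)) (((t - Real.sin t) / t ^ 3) • A) := by
    have h := (hsin.div_const (-(t ^ 3))).smul_const A
    convert h using 2 with k
    · rw [hf]
      simp only
      have e1 : 2 * k + 1 + 2 = 2 * (k + 1) + 1 := by ring
      rw [e1, hodd, smul_smul]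
      congr 1
      have e2 : 2 * (k + 1) + 1 = 2 * k + 1 + 2 := by ring
      field_simp
      ring
    · rw [Finset.sum_range_one]
      norm_num [Nat.factorial]
      rw [div_neg, ← neg_div, neg_sub]
  -- even tail part
  have hcos := (hasSum_nat_add_iff'
      (f := fun n : ℕ => (-1 : ℝ) ^ n * t ^ (2 * n) / (2 * n).factorial) 2).2
      (Real.hasSum_cos t)
  have heventail : HasSum (fun k : ℕ => f (2 * (k + 1)))
      (((t ^ 2 + 2 * Real.cos t - 2) / (2 * t ^ 4)) • A ^ 2) := by
    have h := (hcos.div_const (t ^ 4)).smul_const (A ^ 2)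
    convert h using 2 with k
    · rw [hf]
      simp only
      have e1 : 2 * (k + 1) + 2 = 2 * (k + 2) := by ring
      have e2 : 2 * (k + 1) = 2 * k + 2 := by ring
      rw [e1, e2, heven, smul_smul]
      congr 1
      have h4 : ((2 * (k + 2)).factorial : ℝ) ≠ 0 := by positivity
      field_simp
      ring
    · rw [Finset.sum_range_succ, Finset.sum_range_one]
      norm_num [Nat.factorial]
      rw [div_eq_div_iff (by positivity) (by positivity)]
      ring
  have hevensum : HasSum (fun k : ℕ => f (2 * k))
      (((t ^ 2 + 2 * Real.cos t - 2) / (2 * t ^ 4)) • A ^ 2 + (1 / 2 : ℝ) • 1) := by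
    have h := (hasSum_nat_add_iff (f := fun k : ℕ => f (2 * k)) 1).1 heventail
    convert h using 2
    · rfl
    rw [Finset.sum_range_one, hf]
    norm_num [Nat.factorial]
  have := hevensum.even_add_odd hoddsum
  convert this using 1
  abel
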